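/- (Combined deterministic form of Lemma 6.) Let E be a real Hilbert space, φ : E → ℝ differentiable with ∇φ Lipschitz with constant L > 0, r : E → ℝ convex, 0 < η ≤ 1/(2L), and w, d ∈ E. Suppose w⁺ minimizes u ↦ (1/(2η))‖u − (w − ηd)‖² + r(u) over E, and b minimizes u ↦ (1/(2η))‖u − (w − η∇φ(w))‖² + r(u) over E; define the proximal gradient mapping 𝒢_η(w) := (w − b)/η. Then (η/8)‖𝒢_η(w)‖² ≤ (φ(w) + r(w)) − (φ(w⁺) + r(w⁺)) + (3η/4)‖∇φ(w) − d‖². -/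

import Mathlib

open scoped RealInnerProductSpace

private lemma descent_lemma {E : Type*} [NormedAddCommGroup E] [InnerProductSpace ℝ E]
    [CompleteSpace E]
    (φ : E → ℝ) (L : ℝ) (hL : 0 < L) (hφ : Differentiable ℝ φ)
    (hLip : ∀ x y : E, ‖gradient φ x - gradient φ y‖ ≤ L * ‖x - y‖) (x y : E) :
    φ y ≤ φ x + ⟪gradient φ x, y - x⟫ + L / 2 * ‖y - x‖ ^ 2 := by
  have hgcont : Continuous (gradient φ) := by
    have : LipschitzWith (Real.toNNReal L) (gradient φ) :=
      LipschitzWith.of_dist_le_mul fun a b => by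
        simpa [dist_eq_norm, Real.coe_toNNReal L hL.le] using hLip a b
    exact this.continuous
  set γ : ℝ → E := fun t => x + t • (y - x) with hγ
  have hγcont : Continuous γ := by continuity
  have hderiv : ∀ t : ℝ, HasDerivAt (fun t => φ (γ t)) ⟪gradient φ (γ t), y - x⟫ t := by
    intro t
    have h1 : HasDerivAt γ (y - x) t := by
      have h0 := ((hasDerivAt_id t).smul_const (y - x)).const_add x
      rw [one_smul] at h0; exact h0
    have h2 := (hφ (γ t)).hasGradientAt.hasFDerivAt.comp_hasDerivAt t h1
    simp only [InnerProductSpace.toDual_apply_apply] at h2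
    exact h2
  have hcont : Continuous fun t : ℝ => ⟪gradient φ (γ t), y - x⟫ :=
    (hgcont.comp hγcont).inner continuous_const
  have hFTC : ∫ t in (0:ℝ)..1, ⟪gradient φ (γ t), y - x⟫ = φ (γ 1) - φ (γ 0) :=
    intervalIntegral.integral_eq_sub_of_hasDerivAt (fun t _ => hderiv t)
      (hcont.intervalIntegrable 0 1)
  have hγ0 : γ 0 = x := by simp [hγ]
  have hγ1 : γ 1 = y := by simp [hγ]
  have hbound : ∀ t ∈ Set.Icc (0:ℝ) 1,
      ⟪gradient φ (γ t), y - x⟫ ≤ ⟪gradient φ x, y - x⟫ + L * t * ‖y - x‖ ^ 2 := by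
    intro t ht
    have h1 : ⟪gradient φ (γ t) - gradient φ x, y - x⟫
        ≤ ‖gradient φ (γ t) - gradient φ x‖ * ‖y - x‖ := real_inner_le_norm _ _
    have h2 : ‖gradient φ (γ t) - gradient φ x‖ ≤ L * (t * ‖y - x‖) := by
      have := hLip (γ t) x
      simpa [hγ, norm_smul, abs_of_nonneg ht.1] using this
    have h3 : ‖gradient φ (γ t) - gradient φ x‖ * ‖y - x‖ ≤ L * (t * ‖y - x‖) * ‖y - x‖ :=
      mul_le_mul_of_nonneg_right h2 (norm_nonneg _)
    have h4 : ⟪gradient φ (γ t) - gradient φ x, y - x⟫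
        = ⟪gradient φ (γ t), y - x⟫ - ⟪gradient φ x, y - x⟫ := inner_sub_left _ _ _
    nlinarith [h1, h3]
  have hint : ∫ t in (0:ℝ)..1, ⟪gradient φ (γ t), y - x⟫
      ≤ ∫ t in (0:ℝ)..1, (⟪gradient φ x, y - x⟫ + L * t * ‖y - x‖ ^ 2) := by
    apply intervalIntegral.integral_mono_on (by norm_num)
      (hcont.intervalIntegrable 0 1)
      ((by continuity : Continuous fun t : ℝ => ⟪gradient φ x, y - x⟫ + L * t * ‖y - x‖ ^ 2).intervalIntegrable 0 1)
    exact hbound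
  have hval : ∫ t in (0:ℝ)..1, (⟪gradient φ x, y - x⟫ + L * t * ‖y - x‖ ^ 2)
      = ⟪gradient φ x, y - x⟫ + L / 2 * ‖y - x‖ ^ 2 := by
    rw [intervalIntegral.integral_add (intervalIntegrable_const)
      ((by continuity : Continuous fun t : ℝ => L * t * ‖y - x‖ ^ 2).intervalIntegrable 0 1)]
    simp only [intervalIntegral.integral_const]
    have : ∫ t in (0:ℝ)..1, L * t * ‖y - x‖ ^ 2
        = (L * ‖y - x‖ ^ 2) * ∫ t in (0:ℝ)..1, t := by
      rw [← intervalIntegral.integral_const_mul]; congr 1; ext t; ring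
    rw [this, integral_id]; simp only [smul_eq_mul, one_mul]; norm_num; ring
  rw [hγ0, hγ1] at hFTC
  linarith [hint.trans_eq hval, hFTC.ge, hFTC.le]

private lemma prox_VI {E : Type*} [NormedAddCommGroup E] [InnerProductSpace ℝ E]
    (r : E → ℝ) (hr : ConvexOn ℝ Set.univ r)
    (η : ℝ) (hη0 : 0 < η) (v p : E)
    (hmin : ∀ u : E, (1 / (2 * η)) * ‖p - v‖ ^ 2 + r p
      ≤ (1 / (2 * η)) * ‖u - v‖ ^ 2 + r u) (u : E) :
    0 ≤ ⟪p - v, u - p⟫ + η * (r u - r p) := by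
  have hηne : η ≠ 0 := ne_of_gt hη0
  set A : ℝ := ⟪p - v, u - p⟫ + η * (r u - r p) with hA
  set B : ℝ := ‖u - p‖ ^ 2 / 2 with hB
  have hBnn : 0 ≤ B := by positivity
  have claim : ∀ l : ℝ, 0 < l → l ≤ 1 → 0 ≤ A + l * B := by
    intro l hl0 hl1
    set ul : E := p + l • (u - p) with hul
    have hnorm : ‖ul - v‖ ^ 2
        = ‖p - v‖ ^ 2 + 2 * l * ⟪p - v, u - p⟫ + l ^ 2 * ‖u - p‖ ^ 2 := by
      have : ul - v = (p - v) + l • (u - p) := by rw [hul]; abel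
      rw [this, norm_add_sq_real, real_inner_smul_right, norm_smul,
        Real.norm_eq_abs, mul_pow, sq_abs]
      ring
    have hconv : r ul ≤ (1 - l) * r p + l * r u := by
      have heq : ul = (1 - l) • p + l • u := by
        rw [hul]; rw [smul_sub, sub_smul, one_smul]; abel
      rw [heq]
      exact hr.2 (Set.mem_univ p) (Set.mem_univ u) (by linarith) hl0.le (by ring)
    have h := hmin ul
    rw [hnorm] at h
    have h' : ‖p - v‖ ^ 2 + 2 * η * r p
        ≤ (‖p - v‖ ^ 2 + 2 * l * ⟪p - v, u - p⟫ + l ^ 2 * ‖u - p‖ ^ 2) + 2 * η * r ul := by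
      have h2 := mul_le_mul_of_nonneg_left h (by linarith : (0:ℝ) ≤ 2 * η)
      calc ‖p - v‖ ^ 2 + 2 * η * r p
          = (2 * η) * ((1 / (2 * η)) * ‖p - v‖ ^ 2 + r p) := by field_simp
        _ ≤ (2 * η) * ((1 / (2 * η)) * (‖p - v‖ ^ 2 + 2 * l * ⟪p - v, u - p⟫
              + l ^ 2 * ‖u - p‖ ^ 2) + r ul) := h2
        _ = (‖p - v‖ ^ 2 + 2 * l * ⟪p - v, u - p⟫ + l ^ 2 * ‖u - p‖ ^ 2) + 2 * η * r ul := by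
            field_simp
    have h3 : 0 ≤ l * (2 * (A + l * B)) := by
      rw [hA, hB]
      nlinarith [h', hconv, hl0]
    nlinarith [h3, hl0]
  by_contra hAneg
  push_neg at hAneg
  rcases eq_or_lt_of_le hBnn with hB0 | hBpos
  · have := claim 1 one_pos le_rfl
    rw [← hB0] at this; linarith
  · have hl0 : 0 < min 1 (-A / (2 * B)) :=
      lt_min one_pos (div_pos (by linarith) (by linarith))
    have h := claim _ hl0 (min_le_left _ _)
    have hlB : min 1 (-A / (2 * B)) * B ≤ (-A / (2 * B)) * B :=
      mul_le_mul_of_nonneg_right (min_le_right _ _) hBnn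
    have : (-A / (2 * B)) * B = -A / 2 := by field_simp
    linarith

/-- Combined deterministic form of Lemma 6: for `0 < η ≤ 1/(2L)`, a proximal
step `w⁺` along the estimator `d` satisfies
`(η/8)‖𝒢_η(w)‖² ≤ (φ(w)+r(w)) − (φ(w⁺)+r(w⁺)) + (3η/4)‖∇φ(w) − d‖²`,
where `𝒢_η(w) = (w − b)/η` is the exact proximal gradient mapping. -/
theorem prox_step_stationarity (E : Type*) [NormedAddCommGroup E]
    [InnerProductSpace ℝ E] [CompleteSpace E]
    (φ : E → ℝ) (L : ℝ) (hL : 0 < L) (hφ : Differentiable ℝ φ)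
    (hLip : ∀ x y : E, ‖gradient φ x - gradient φ y‖ ≤ L * ‖x - y‖)
    (r : E → ℝ) (hr : ConvexOn ℝ Set.univ r)
    (η : ℝ) (hη0 : 0 < η) (hη : η ≤ 1 / (2 * L))
    (w d wplus b : E)
    (hmin : ∀ u : E,
      (1 / (2 * η)) * ‖wplus - (w - η • d)‖ ^ 2 + r wplus
        ≤ (1 / (2 * η)) * ‖u - (w - η • d)‖ ^ 2 + r u)
    (hb : ∀ u : E,
      (1 / (2 * η)) * ‖b - (w - η • gradient φ w)‖ ^ 2 + r b
        ≤ (1 / (2 * η)) * ‖u - (w - η • gradient φ w)‖ ^ 2 + r u) :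
    (η / 8) * ‖(1 / η) • (w - b)‖ ^ 2
      ≤ (φ w + r w) - (φ wplus + r wplus)
        + (3 * η / 4) * ‖gradient φ w - d‖ ^ 2 := by
  set g : E := gradient φ w with hg
  set P : ℝ := ‖w - wplus‖ with hP
  set Q : ℝ := ‖g - d‖ with hQ
  set N : ℝ := ‖wplus - b‖ with hN
  set S : ℝ := ‖w - b‖ with hS
  have hηne : η ≠ 0 := ne_of_gt hη0
  have hηL : η * (2 * L) ≤ 1 := (le_div_iff₀ (by positivity)).mp hη
  -- VI at wplus, tested at w
  have VI1 := prox_VI r hr η hη0 (w - η • d) wplus hmin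
  have VI2 := prox_VI r hr η hη0 (w - η • g) b hb
  -- f1 : 0 ≤ -P^2 + η*⟪d, w - wplus⟫ + η*(r w - r wplus)
  have f1 : 0 ≤ -P ^ 2 + η * ⟪d, w - wplus⟫ + η * (r w - r wplus) := by
    have h := VI1 w
    have e1 : ⟪wplus - (w - η • d), w - wplus⟫
        = -P ^ 2 + η * ⟪d, w - wplus⟫ := by
      rw [show wplus - (w - η • d) = -(w - wplus) + η • d by abel]
      rw [inner_add_left, real_inner_smul_left, inner_neg_left,
        real_inner_self_eq_norm_sq]
    rw [e1] at h
    linarith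
  -- descent lemma
  have f2 : φ wplus ≤ φ w - ⟪g, w - wplus⟫ + L / 2 * P ^ 2 := by
    have h := descent_lemma φ L hL hφ hLip w wplus
    have e : ⟪g, wplus - w⟫ = -⟪g, w - wplus⟫ := by
      rw [show wplus - w = -(w - wplus) by abel, inner_neg_right]
    have en : ‖wplus - w‖ = P := by rw [hP, norm_sub_rev]
    rw [← hg, e, en] at h
    linarith
  -- Cauchy–Schwarz
  have f3 : ⟪d, w - wplus⟫ - ⟪g, w - wplus⟫ ≤ Q * P := by
    have h := real_inner_le_norm (d - g) (w - wplus)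
    rw [inner_sub_left] at h
    have : ‖d - g‖ = Q := by rw [hQ, norm_sub_rev]
    rw [this] at h
    exact h
  -- nonexpansiveness: N ≤ η * Q
  have f4 : N ≤ η * Q := by
    have h2 := VI1 b
    have h3 := VI2 wplus
    have e2 : ⟪wplus - (w - η • d), b - wplus⟫ + ⟪b - (w - η • g), wplus - b⟫
        = -N ^ 2 + η * ⟪d - g, b - wplus⟫ := by
      rw [hN, ← real_inner_self_eq_norm_sq]
      simp only [inner_sub_left, inner_sub_right, real_inner_smul_left,
        real_inner_smul_right, real_inner_comm]
      ring
    have hsum : 0 ≤ -N ^ 2 + η * ⟪d - g, b - wplus⟫ := by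
      rw [← e2]; linarith
    have hcs : ⟪d - g, b - wplus⟫ ≤ Q * N := by
      have h := real_inner_le_norm (d - g) (b - wplus)
      have e3 : ‖d - g‖ = Q := by rw [hQ, norm_sub_rev]
      have e4 : ‖b - wplus‖ = N := by rw [hN, norm_sub_rev]
      rw [e3, e4] at h
      exact h
    have hQnn : 0 ≤ Q := norm_nonneg _
    have hNnn : 0 ≤ N := norm_nonneg _
    nlinarith [hsum, mul_le_mul_of_nonneg_left hcs hη0.le, hQnn, hNnn,
      mul_nonneg hη0.le hQnn]
  -- triangle inequality
  have f5 : S ≤ P + N := by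
    rw [hS, hP, hN, show w - b = (w - wplus) + (wplus - b) by abel]
    exact norm_add_le _ _
  -- rewrite the LHS
  have hLHS : ‖(1 / η) • (w - b)‖ ^ 2 = (1 / η) ^ 2 * S ^ 2 := by
    rw [hS, norm_smul, Real.norm_eq_abs, abs_of_pos (by positivity), mul_pow]
  rw [hLHS, show η / 8 * ((1 / η) ^ 2 * S ^ 2) = S ^ 2 / (8 * η) by
    field_simp, div_le_iff₀ (by positivity)]
  -- assemble
  have hf2η := mul_le_mul_of_nonneg_left f2 hη0.le
  have hQP := mul_le_mul_of_nonneg_left f3 hη0.le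
  have hLP : η * L * P ^ 2 ≤ 1 / 2 * P ^ 2 := by nlinarith [sq_nonneg P, hηL]
  have hS2 : S ^ 2 ≤ (P + η * Q) ^ 2 := by
    have hSle : S ≤ P + η * Q := by linarith
    have hSnn : (0:ℝ) ≤ S := norm_nonneg _
    exact pow_le_pow_left₀ hSnn hSle 2
  nlinarith [f1, hf2η, hQP, hLP, sq_nonneg (η * Q - P), hS2]
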